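/- Let d, k be real numbers with 0 < d < k < 1 and (k+d)² = 4d, and set c = √((k−d)/(2d)). For s ≥ 0 let b(s) = (d+1)s + 1 − k and q(s) = (ds − k)(s + 1) + 1, and define λ₁(ξ₁,ξ₂) = (−b(s) + √(b(s)² − 4q(s)))/2 with s = ξ₁² + ξ₂² (the larger root of the dispersion relation λ² + b(s)λ + q(s) = 0). Then b(c²)² − 4q(c²) > 0, so λ₁ is real-analytic in a neighborhood of the point (0, c), and at (0, c): λ₁(0,c) = 0; the partial derivatives ∂λ₁/∂ξ₁, ∂²λ₁/∂ξ₁², ∂³λ₁/∂ξ₁³ all vanish; (1/4!) ∂⁴λ₁/∂ξ₁⁴(0,c) = −2d²/((k+d)(1−d)) ≠ 0; moreover ∂λ₁/∂ξ₂(0,c) = 0 and ∂²λ₁/∂ξ₂²(0,c) ≠ 0. -/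

import Mathlib

open Real Filter

lemma myAnalyticAt_deriv {f : ℝ → ℝ} {x : ℝ} (h : AnalyticAt ℝ f x) :
    AnalyticAt ℝ (deriv f) x := by
  obtain ⟨s, hs, hfs⟩ := h.exists_mem_nhds_analyticOnNhd
  exact hfs.deriv x (mem_of_mem_nhds hs)

lemma myAnalyticAt_log {x : ℝ} (hx : 0 < x) : AnalyticAt ℝ Real.log x := by
  have h1 : AnalyticAt ℂ Complex.log (x : ℂ) :=
    analyticAt_clog (Complex.ofReal_mem_slitPlane.2 hx)
  have h3 : AnalyticAt ℝ (fun y : ℝ => (y : ℂ)) x := Complex.ofRealCLM.analyticAt x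
  have h4 : AnalyticAt ℝ (fun y : ℝ => Complex.log (y : ℂ)) x := by
    have := h1.restrictScalars (𝕜 := ℝ)
    exact this.comp h3
  have h5 : AnalyticAt ℝ (fun y : ℝ => (Complex.log (y : ℂ)).re) x :=
    (Complex.reCLM.analyticAt _).comp h4
  exact h5.congr (Filter.Eventually.of_forall fun y => Complex.log_ofReal_re y)

lemma myAnalyticAt_sqrt {x : ℝ} (hx : 0 < x) : AnalyticAt ℝ Real.sqrt x := by
  have h : AnalyticAt ℝ (fun y : ℝ => Real.exp (Real.log y * (1/2 : ℝ))) x :=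
    ((myAnalyticAt_log hx).mul analyticAt_const).rexp
  apply h.congr
  filter_upwards [eventually_gt_nhds hx] with y hy
  exact ((Real.rpow_def_of_pos hy (1/2)).symm.trans (Real.sqrt_eq_rpow y).symm)

lemma myFactor (a : ℝ) : ∀ m : ℕ, ∀ n : ℕ, n ≤ m → ∀ h : ℝ → ℝ, AnalyticAt ℝ h a →
    iteratedDeriv n (fun x => (x - a) ^ m * h x) a
      = if n = m then (m.factorial : ℝ) * h a else 0 := by
  intro m
  induction m with
  | zero =>
    intro n hn h hh
    interval_cases n
    simp [iteratedDeriv_zero]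
  | succ m ih =>
    intro n hn h hh
    match n with
    | 0 =>
      simp [iteratedDeriv_zero, Nat.succ_ne_zero]
    | Nat.succ n =>
      rw [iteratedDeriv_succ']
      have hev : deriv (fun x => (x - a) ^ (m + 1) * h x) =ᶠ[nhds a]
          (fun x => (x - a) ^ m * (((m : ℝ) + 1) * h x + (x - a) * deriv h x)) := by
        filter_upwards [hh.eventually_analyticAt] with y hy
        have h1 : HasDerivAt (fun x : ℝ => (x - a) ^ (m + 1))
            ((((m : ℕ) + 1 : ℕ) : ℝ) * (y - a) ^ m * 1) y := by
          simpa using ((hasDerivAt_id y).sub_const a).fun_pow (m + 1)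
        have h2 : HasDerivAt h (deriv h y) y := hy.differentiableAt.hasDerivAt
        rw [(h1.fun_mul h2).deriv]
        push_cast
        ring
      rw [hev.iteratedDeriv_eq n]
      have hh' : AnalyticAt ℝ (fun x => ((m : ℝ) + 1) * h x + (x - a) * deriv h x) a := by
        exact (analyticAt_const.mul hh).add
          ((analyticAt_id.sub analyticAt_const).mul (myAnalyticAt_deriv hh))
      rw [ih n (Nat.succ_le_succ_iff.mp hn) _ hh']
      by_cases hnm : n = m
      · subst hnm
        simp [Nat.factorial_succ]
        ring
      · simp [hnm]

/-- Example 3.5. Degeneracy of the dispersion relation of the Turing system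
at the critical wavenumber `(0, c)`. -/
theorem turing_dispersion_degeneracy (d k : ℝ) (hd0 : 0 < d) (hdk : d < k) (hk1 : k < 1)
    (hcrit : (k + d) ^ 2 = 4 * d) :
    -- discriminant, larger root of λ² + b(s)λ + q(s) = 0 with s = ξ₁² + ξ₂²
    ∀ (c : ℝ), c = Real.sqrt ((k - d) / (2 * d)) →
    ∀ (b q : ℝ → ℝ), (∀ s, b s = (d + 1) * s + 1 - k) →
      (∀ s, q s = (d * s - k) * (s + 1) + 1) →
    ∀ (lam₁ : ℝ → ℝ → ℝ),
      (∀ ξ₁ ξ₂, lam₁ ξ₁ ξ₂ =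
        (-b (ξ₁ ^ 2 + ξ₂ ^ 2) + Real.sqrt (b (ξ₁ ^ 2 + ξ₂ ^ 2) ^ 2
          - 4 * q (ξ₁ ^ 2 + ξ₂ ^ 2))) / 2) →
    -- positive discriminant at the critical wavenumber
    (0 < b (c ^ 2) ^ 2 - 4 * q (c ^ 2)) ∧
    -- real-analyticity near (0, c)
    (∀ᶠ p in nhds ((0 : ℝ), c), AnalyticAt ℝ (fun p : ℝ × ℝ => lam₁ p.1 p.2) p) ∧
    -- value and ξ₁-partial derivatives at (0, c)
    lam₁ 0 c = 0 ∧
    iteratedDeriv 1 (fun ξ₁ => lam₁ ξ₁ c) 0 = 0 ∧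
    iteratedDeriv 2 (fun ξ₁ => lam₁ ξ₁ c) 0 = 0 ∧
    iteratedDeriv 3 (fun ξ₁ => lam₁ ξ₁ c) 0 = 0 ∧
    (1 / (Nat.factorial 4 : ℝ)) * iteratedDeriv 4 (fun ξ₁ => lam₁ ξ₁ c) 0
      = -(2 * d ^ 2) / ((k + d) * (1 - d)) ∧
    -(2 * d ^ 2) / ((k + d) * (1 - d)) ≠ 0 ∧
    -- ξ₂-partial derivatives at (0, c)
    deriv (fun ξ₂ => lam₁ 0 ξ₂) c = 0 ∧
    iteratedDeriv 2 (fun ξ₂ => lam₁ 0 ξ₂) c ≠ 0 := by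
  intro c hc b q hb hq lam hlam
  have hd' : (0:ℝ) < 2 * d := by linarith
  have h1d : (0:ℝ) < 1 - d := by linarith
  have hkd : (0:ℝ) < k + d := by linarith
  have hs₀ : (0:ℝ) < (k - d) / (2 * d) := div_pos (by linarith) hd'
  have hcpos : 0 < c := by rw [hc]; exact Real.sqrt_pos.2 hs₀
  have hc2 : c ^ 2 = (k - d) / (2 * d) := by rw [hc]; exact Real.sq_sqrt hs₀.le
  -- key algebraic identities
  have hkd2 : (k - d) ^ 2 = 4 * d * (1 - k) := by linear_combination hcrit
  have hqfac : ∀ s : ℝ, q s = d * (s - c ^ 2) ^ 2 := by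
    intro s
    rw [hq, hc2]
    field_simp
    linear_combination (-1 : ℝ) * hcrit
  set B0 : ℝ := (k + d) * (1 - d) / (2 * d) with hB0
  have hB0pos : 0 < B0 := div_pos (mul_pos hkd h1d) hd'
  have hbc : b (c ^ 2) = B0 := by
    rw [hb, hc2, hB0]; field_simp; ring
  have hqc : q (c ^ 2) = 0 := by rw [hqfac]; ring
  have hDc : b (c ^ 2) ^ 2 - 4 * q (c ^ 2) = B0 ^ 2 := by rw [hbc, hqc]; ring
  have goal1 : 0 < b (c ^ 2) ^ 2 - 4 * q (c ^ 2) := by rw [hDc]; positivity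
  have hsr : Real.sqrt (b (c ^ 2) ^ 2 - 4 * q (c ^ 2)) = B0 := by
    rw [hDc]; exact Real.sqrt_sq hB0pos.le
  -- continuity of b, q as polynomials
  have hbeq : b = fun s => (d + 1) * s + 1 - k := funext hb
  have hqeq : q = fun s => (d * s - k) * (s + 1) + 1 := funext hq
  have hbcont : Continuous b := by rw [hbeq]; exact ((continuous_const.mul continuous_id).add continuous_const).sub continuous_const
  have hqcont : Continuous q := by rw [hqeq]; exact (((continuous_const.mul continuous_id).sub continuous_const).mul (continuous_id.add continuous_const)).add continuous_const
  have hDcont : Continuous (fun s : ℝ => b s ^ 2 - 4 * q s) := by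
    exact (hbcont.pow 2).sub (continuous_const.mul hqcont)
  -- analyticity of b, q, and the root function at points with positive discriminant
  have hban : ∀ s : ℝ, AnalyticAt ℝ b s := by
    intro s; rw [hbeq]
    exact ((analyticAt_const.mul analyticAt_id).add analyticAt_const).sub analyticAt_const
  have hqan : ∀ s : ℝ, AnalyticAt ℝ q s := by
    intro s; rw [hqeq]
    exact (((analyticAt_const.mul analyticAt_id).sub analyticAt_const).mul
      (analyticAt_id.add analyticAt_const)).add analyticAt_const
  have hDan : ∀ s : ℝ, AnalyticAt ℝ (fun s => b s ^ 2 - 4 * q s) s := fun s =>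
    ((hban s).pow 2).sub (analyticAt_const.mul (hqan s))
  have hgan : ∀ s : ℝ, 0 < b s ^ 2 - 4 * q s →
      AnalyticAt ℝ (fun s => (-b s + Real.sqrt (b s ^ 2 - 4 * q s)) / 2) s := by
    intro s hs
    have hsq : AnalyticAt ℝ (fun s : ℝ => Real.sqrt (b s ^ 2 - 4 * q s)) s :=
      AnalyticAt.comp (𝕜 := ℝ) (g := Real.sqrt) (f := fun s => b s ^ 2 - 4 * q s)
        (myAnalyticAt_sqrt hs) (hDan s)
    exact (((hban s).neg).add hsq).div analyticAt_const two_ne_zero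
  -- setup for the ξ₁-direction
  have hinan1 : AnalyticAt ℝ (fun ξ : ℝ => ξ ^ 2 + c ^ 2) (0:ℝ) :=
    (analyticAt_id.pow 2).add analyticAt_const
  have hD0 : 0 < (fun ξ : ℝ => b (ξ ^ 2 + c ^ 2) ^ 2 - 4 * q (ξ ^ 2 + c ^ 2)) 0 := by
    simpa using goal1
  have hB0' : 0 < (fun ξ : ℝ => b (ξ ^ 2 + c ^ 2)) 0 := by simpa [hbc] using hB0pos
  have hev1 : ∀ᶠ ξ : ℝ in nhds 0, 0 < b (ξ ^ 2 + c ^ 2) ^ 2 - 4 * q (ξ ^ 2 + c ^ 2) :=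
    ((hDcont.comp ((continuous_pow 2).add continuous_const)).continuousAt).eventually
      (eventually_gt_nhds hD0)
  have hevB1 : ∀ᶠ ξ : ℝ in nhds 0, 0 < b (ξ ^ 2 + c ^ 2) :=
    ((hbcont.comp ((continuous_pow 2).add continuous_const)).continuousAt).eventually
      (eventually_gt_nhds hB0')
  have key1 : (fun ξ : ℝ => lam ξ c) =ᶠ[nhds (0:ℝ)] (fun ξ : ℝ => (ξ - 0) ^ 4 *
      (-(2 * d) / (b (ξ ^ 2 + c ^ 2) +
        Real.sqrt (b (ξ ^ 2 + c ^ 2) ^ 2 - 4 * q (ξ ^ 2 + c ^ 2))))) := by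
    filter_upwards [hev1, hevB1] with ξ hD hB
    have hN : 0 < b (ξ ^ 2 + c ^ 2) +
        Real.sqrt (b (ξ ^ 2 + c ^ 2) ^ 2 - 4 * q (ξ ^ 2 + c ^ 2)) :=
      add_pos_of_pos_of_nonneg hB (Real.sqrt_nonneg _)
    have hsq : Real.sqrt (b (ξ ^ 2 + c ^ 2) ^ 2 - 4 * q (ξ ^ 2 + c ^ 2)) ^ 2
        = b (ξ ^ 2 + c ^ 2) ^ 2 - 4 * q (ξ ^ 2 + c ^ 2) := Real.sq_sqrt hD.le
    have hqv : q (ξ ^ 2 + c ^ 2) = d * (ξ ^ 2) ^ 2 := by rw [hqfac]; ring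
    rw [hlam]
    field_simp
    linear_combination hsq - 4 * hqv
  have hNval : b ((0:ℝ) ^ 2 + c ^ 2) +
      Real.sqrt (b ((0:ℝ) ^ 2 + c ^ 2) ^ 2 - 4 * q ((0:ℝ) ^ 2 + c ^ 2)) = 2 * B0 := by
    have h0c : (0:ℝ) ^ 2 + c ^ 2 = c ^ 2 := by norm_num
    rw [h0c, hsr, hbc]; ring
  have han1 : AnalyticAt ℝ (fun ξ : ℝ => -(2 * d) / (b (ξ ^ 2 + c ^ 2) +
      Real.sqrt (b (ξ ^ 2 + c ^ 2) ^ 2 - 4 * q (ξ ^ 2 + c ^ 2)))) 0 := by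
    apply analyticAt_const.div
    · have hsqan : AnalyticAt ℝ
          (fun ξ : ℝ => Real.sqrt (b (ξ ^ 2 + c ^ 2) ^ 2 - 4 * q (ξ ^ 2 + c ^ 2))) 0 := by
        have h1 : AnalyticAt ℝ (fun s : ℝ => Real.sqrt (b s ^ 2 - 4 * q s))
            ((fun ξ : ℝ => ξ ^ 2 + c ^ 2) 0) := by
          refine AnalyticAt.comp (𝕜 := ℝ) (g := Real.sqrt)
            (f := fun s => b s ^ 2 - 4 * q s) (myAnalyticAt_sqrt ?_) (hDan _)
          simpa using goal1
        exact AnalyticAt.comp (𝕜 := ℝ) (g := fun s : ℝ => Real.sqrt (b s ^ 2 - 4 * q s))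
          (f := fun ξ : ℝ => ξ ^ 2 + c ^ 2) h1 hinan1
      have hban1 : AnalyticAt ℝ (fun ξ : ℝ => b (ξ ^ 2 + c ^ 2)) 0 :=
        AnalyticAt.comp (𝕜 := ℝ) (g := b) (f := fun ξ : ℝ => ξ ^ 2 + c ^ 2)
          (hban _) hinan1
      exact hban1.add hsqan
    · simp only [hNval]; positivity
  -- setup for the ξ₂-direction
  have hinan2 : AnalyticAt ℝ (fun ξ : ℝ => ξ ^ 2) c :=
    (analyticAt_id.pow 2)
  have hD0' : 0 < (fun ξ : ℝ => b (ξ ^ 2) ^ 2 - 4 * q (ξ ^ 2)) c := by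
    simpa using goal1
  have hB0'' : 0 < (fun ξ : ℝ => b (ξ ^ 2)) c := by simpa [hbc] using hB0pos
  have hev2 : ∀ᶠ ξ : ℝ in nhds c, 0 < b (ξ ^ 2) ^ 2 - 4 * q (ξ ^ 2) :=
    ((hDcont.comp ((continuous_pow 2))).continuousAt).eventually
      (eventually_gt_nhds hD0')
  have hevB2 : ∀ᶠ ξ : ℝ in nhds c, 0 < b (ξ ^ 2) :=
    ((hbcont.comp ((continuous_pow 2))).continuousAt).eventually
      (eventually_gt_nhds hB0'')
  have key2 : (fun ξ : ℝ => lam 0 ξ) =ᶠ[nhds c] (fun ξ : ℝ => (ξ - c) ^ 2 *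
      (-(2 * d) * (ξ + c) ^ 2 / (b (ξ ^ 2) +
        Real.sqrt (b (ξ ^ 2) ^ 2 - 4 * q (ξ ^ 2))))) := by
    filter_upwards [hev2, hevB2] with ξ hD hB
    have hN : 0 < b (ξ ^ 2) +
        Real.sqrt (b (ξ ^ 2) ^ 2 - 4 * q (ξ ^ 2)) :=
      add_pos_of_pos_of_nonneg hB (Real.sqrt_nonneg _)
    have hsq : Real.sqrt (b (ξ ^ 2) ^ 2 - 4 * q (ξ ^ 2)) ^ 2
        = b (ξ ^ 2) ^ 2 - 4 * q (ξ ^ 2) := Real.sq_sqrt hD.le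
    have hqv : q (ξ ^ 2) = d * ((ξ - c) * (ξ + c)) ^ 2 := by rw [hqfac]; ring
    rw [hlam]
    rw [show ((0:ℝ) ^ 2 + ξ ^ 2) = ξ ^ 2 from by norm_num]
    field_simp
    linear_combination hsq - 4 * hqv
  have hNval2 : b (c ^ 2) +
      Real.sqrt (b (c ^ 2) ^ 2 - 4 * q (c ^ 2)) = 2 * B0 := by rw [hsr, hbc]; ring
  have han2 : AnalyticAt ℝ (fun ξ : ℝ => -(2 * d) * (ξ + c) ^ 2 / (b (ξ ^ 2) +
      Real.sqrt (b (ξ ^ 2) ^ 2 - 4 * q (ξ ^ 2)))) c := by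
    apply AnalyticAt.div
    · exact analyticAt_const.mul ((analyticAt_id.add analyticAt_const).pow 2)
    · have h1 : AnalyticAt ℝ (fun s : ℝ => Real.sqrt (b s ^ 2 - 4 * q s))
          ((fun ξ : ℝ => ξ ^ 2) c) := by
        refine AnalyticAt.comp (𝕜 := ℝ) (g := Real.sqrt)
          (f := fun s => b s ^ 2 - 4 * q s) (myAnalyticAt_sqrt ?_) (hDan _)
        simpa using goal1
      have hsqan := AnalyticAt.comp (𝕜 := ℝ)
        (g := fun s : ℝ => Real.sqrt (b s ^ 2 - 4 * q s))
        (f := fun ξ : ℝ => ξ ^ 2) h1 hinan2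
      have hban2 := AnalyticAt.comp (𝕜 := ℝ) (g := b)
        (f := fun ξ : ℝ => ξ ^ 2) (hban _) hinan2
      exact hban2.add hsqan
    · simp only [hNval2]; positivity
  refine ⟨goal1, ?_, ?_, ?_, ?_, ?_, ?_, ?_, ?_, ?_⟩
  · -- eventual analyticity
    have hin : Continuous (fun p : ℝ × ℝ => p.1 ^ 2 + p.2 ^ 2) :=
      ((continuous_fst.pow 2).add (continuous_snd.pow 2))
    have hcomp : ContinuousAt (fun p : ℝ × ℝ => b (p.1 ^ 2 + p.2 ^ 2) ^ 2
        - 4 * q (p.1 ^ 2 + p.2 ^ 2)) ((0 : ℝ), c) := (hDcont.comp hin).continuousAt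
    have hval : (fun p : ℝ × ℝ => b (p.1 ^ 2 + p.2 ^ 2) ^ 2 - 4 * q (p.1 ^ 2 + p.2 ^ 2))
        ((0 : ℝ), c) = b (c ^ 2) ^ 2 - 4 * q (c ^ 2) := by norm_num
    have h0 : 0 < (fun p : ℝ × ℝ => b (p.1 ^ 2 + p.2 ^ 2) ^ 2
        - 4 * q (p.1 ^ 2 + p.2 ^ 2)) ((0 : ℝ), c) := by simpa using goal1
    have hev : ∀ᶠ p : ℝ × ℝ in nhds ((0 : ℝ), c),
        0 < b (p.1 ^ 2 + p.2 ^ 2) ^ 2 - 4 * q (p.1 ^ 2 + p.2 ^ 2) :=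
      hcomp.eventually (eventually_gt_nhds h0)
    filter_upwards [hev] with p hp
    have hanin : AnalyticAt ℝ (fun p : ℝ × ℝ => p.1 ^ 2 + p.2 ^ 2) p :=
      (analyticAt_fst.pow 2).add (analyticAt_snd.pow 2)
    have := AnalyticAt.comp (𝕜 := ℝ)
      (g := fun s => (-b s + Real.sqrt (b s ^ 2 - 4 * q s)) / 2)
      (f := fun p : ℝ × ℝ => p.1 ^ 2 + p.2 ^ 2) (hgan _ hp) hanin
    have hfun : (fun p₁ : ℝ × ℝ => lam p₁.1 p₁.2) = fun p₁ : ℝ × ℝ =>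
        (-b (p₁.1 ^ 2 + p₁.2 ^ 2) + Real.sqrt (b (p₁.1 ^ 2 + p₁.2 ^ 2) ^ 2
          - 4 * q (p₁.1 ^ 2 + p₁.2 ^ 2))) / 2 := by
      funext p₁; exact hlam p₁.1 p₁.2
    rw [hfun]
    exact this
  · -- value at (0, c)
    rw [hlam]
    norm_num
    rw [hsr, hbc]
    ring
  · -- first derivative
    rw [key1.iteratedDeriv_eq 1, myFactor 0 4 1 (by norm_num) _ han1]
    norm_num
  · -- second derivative
    rw [key1.iteratedDeriv_eq 2, myFactor 0 4 2 (by norm_num) _ han1]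
    norm_num
  · -- third derivative
    rw [key1.iteratedDeriv_eq 3, myFactor 0 4 3 (by norm_num) _ han1]
    norm_num
  · -- fourth derivative
    rw [key1.iteratedDeriv_eq 4, myFactor 0 4 4 le_rfl _ han1]
    simp only [if_pos rfl, ↓reduceIte, hNval]
    rw [hB0]
    have h2d : (2 * d : ℝ) ≠ 0 := ne_of_gt hd'
    have hne : ((k + d) * (1 - d) : ℝ) ≠ 0 := ne_of_gt (mul_pos hkd h1d)
    field_simp
  · -- nonzero coefficient
    have hnum : (0:ℝ) < 2 * d ^ 2 := by positivity
    have hden : (0:ℝ) < (k + d) * (1 - d) := mul_pos hkd h1d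
    have : -(2 * d ^ 2) / ((k + d) * (1 - d)) < 0 :=
      div_neg_of_neg_of_pos (by linarith) hden
    exact ne_of_lt this
  · -- ξ₂ first derivative
    rw [← iteratedDeriv_one, key2.iteratedDeriv_eq 1, myFactor c 2 1 (by norm_num) _ han2]
    norm_num
  · -- ξ₂ second derivative
    rw [key2.iteratedDeriv_eq 2, myFactor c 2 2 le_rfl _ han2]
    simp only [if_pos rfl, hNval2]
    have hHneg : -(2 * d) * (c + c) ^ 2 / (2 * B0) < 0 := by
      apply div_neg_of_neg_of_pos
      · have : 0 < (2 * d) * (c + c) ^ 2 := by positivity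
        linarith
      · positivity
    have : (Nat.factorial 2 : ℝ) * (-(2 * d) * (c + c) ^ 2 / (2 * B0)) < 0 := by
      have h2 : (0:ℝ) < (Nat.factorial 2 : ℝ) := by norm_num
      exact mul_neg_of_pos_of_neg h2 hHneg
    exact ne_of_lt this
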